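/- (Continuous bias bound) Let M be an MDP with finite state space and action space ℝⁿ whose reward is L_r-Lipschitz in the action (in ℓ¹ norm) and whose transition kernel is L_p-Lipschitz in total variation in the action. Let v*_σ be the optimal value among Gaussian policies with fixed componentwise standard deviation σ ∈ ℝⁿ_{≥0}. Then ‖v* - v*_σ‖_∞ ≤ √(2/π) · ((1-γ)L_r + γ L_p R_max) ‖σ‖₁ / (1-γ)². -/

import Mathlib

open MeasureTheory ProbabilityTheory
open Real Set Filter
open scoped NNReal ENNReal

/-- Product Gaussian measure on `ℝⁿ` with mean `a` and componentwise standard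
deviation `σ`. -/
noncomputable def gaussPi {n : ℕ} (σ : Fin n → NNReal) (a : Fin n → ℝ) :
    Measure (Fin n → ℝ) :=
  Measure.pi fun i => gaussianReal (a i) (σ i ^ 2)


lemma myint_Ioi {b : ℝ} (hb : 0 < b) :
    ∫ r in Ioi (0:ℝ), r * rexp (-b * r ^ 2) = (2 * b)⁻¹ := by
  have A : ∀ x : ℝ, HasDerivAt (fun y => -(2 * b)⁻¹ * rexp (-b * y ^ 2))
      (x * rexp (-b * x ^ 2)) x := by
    intro x
    convert ((hasDerivAt_pow 2 x).const_mul (-b)).exp.const_mul (-(2 * b)⁻¹) using 1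
    · rfl
    · rfl
    have hb' : b ≠ 0 := hb.ne'
    field_simp
    ring
  have B : Tendsto (fun y : ℝ ↦ -(2 * b)⁻¹ * rexp (-b * y ^ 2)) atTop (nhds (-(2 * b)⁻¹ * 0)) := by
    refine Tendsto.const_mul _ ?_
    refine Real.tendsto_exp_atBot.comp ?_
    exact (tendsto_pow_atTop two_ne_zero).const_mul_atTop_of_neg (neg_lt_zero.2 hb)
  have := integral_Ioi_of_hasDerivAt_of_tendsto' (a := 0) (fun x _ => A x)
    (integrable_mul_exp_neg_mul_sq hb).integrableOn B
  simpa using this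

lemma myint_abs {b : ℝ} (hb : 0 < b) :
    ∫ x : ℝ, |x| * rexp (-b * x ^ 2) = b⁻¹ := by
  have h : ∀ x : ℝ, |x| * rexp (-b * x ^ 2) = (fun t => t * rexp (-b * t ^ 2)) |x| := by
    intro x; simp [sq_abs]
  calc ∫ x : ℝ, |x| * rexp (-b * x ^ 2) = ∫ x : ℝ, (fun t => t * rexp (-b * t ^ 2)) |x| := by
        simp_rw [h]
    _ = 2 * ∫ x in Ioi (0:ℝ), x * rexp (-b * x ^ 2) := integral_comp_abs (f := fun t => t * rexp (-b * t ^ 2))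
    _ = b⁻¹ := by rw [myint_Ioi hb]; field_simp

lemma myint_abs_integrable {b : ℝ} (hb : 0 < b) :
    Integrable (fun x : ℝ => |x| * rexp (-b * x ^ 2)) := by
  have := (integrable_mul_exp_neg_mul_sq hb).abs
  refine this.congr (ae_of_all _ fun x => ?_)
  simp [abs_mul, abs_of_nonneg (exp_nonneg _)]

lemma gauss_withDensity (m : ℝ) {v : ℝ≥0} (hv : v ≠ 0) :
    gaussianReal m v
      = MeasureTheory.volume.withDensity
          (fun x => ((gaussianPDFReal m v x).toNNReal : ℝ≥0∞)) := by
  rw [gaussianReal_of_var_ne_zero m hv]; rfl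

lemma gauss_integral_eq (m : ℝ) {v : ℝ≥0} (hv : v ≠ 0) (g : ℝ → ℝ) :
    ∫ x, g x ∂(gaussianReal m v) = ∫ x, gaussianPDFReal m v x * g x := by
  rw [gauss_withDensity m hv,
    integral_withDensity_eq_integral_smul (measurable_gaussianPDFReal m v).real_toNNReal]
  congr 1 with x
  simp [NNReal.smul_def, Real.coe_toNNReal _ (gaussianPDFReal_nonneg m v x)]

lemma gauss_integrable_iff (m : ℝ) {v : ℝ≥0} (hv : v ≠ 0) (g : ℝ → ℝ) :
    Integrable g (gaussianReal m v)
      ↔ Integrable (fun x => gaussianPDFReal m v x * g x) := by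
  rw [gauss_withDensity m hv,
    integrable_withDensity_iff_integrable_smul (measurable_gaussianPDFReal m v).real_toNNReal]
  constructor <;> intro h <;> refine h.congr (ae_of_all _ fun x => ?_) <;>
    simp [NNReal.smul_def, Real.coe_toNNReal _ (gaussianPDFReal_nonneg m v x)]

lemma gauss_mad_integrable (m : ℝ) (v : ℝ≥0) :
    Integrable (fun x => |x - m|) (gaussianReal m v) := by
  by_cases hv : v = 0
  · subst hv
    simp only [gaussianReal_zero_var]
    refine ⟨(continuous_id.sub continuous_const).abs.aestronglyMeasurable, ?_⟩
    rw [HasFiniteIntegral, lintegral_dirac' _ (by measurability)]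
    exact ENNReal.coe_lt_top
  · rw [gauss_integrable_iff m hv]
    have hv' : (0:ℝ) < (v:ℝ) := lt_of_le_of_ne (v.coe_nonneg) (by exact_mod_cast (Ne.symm hv))
    have hb : (0:ℝ) < (2 * (v:ℝ))⁻¹ := by positivity
    have key : Integrable (fun y : ℝ =>
        (√(2 * π * (v:ℝ)))⁻¹ * (|y| * rexp (-(2 * (v:ℝ))⁻¹ * y ^ 2))) :=
      (myint_abs_integrable hb).const_mul _
    refine (key.comp_sub_right m).congr (ae_of_all _ fun x => ?_)
    simp only [gaussianPDFReal]
    rw [neg_div, div_eq_inv_mul]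
    ring

lemma gauss_mad (m : ℝ) (v : ℝ≥0) :
    ∫ x, |x - m| ∂(gaussianReal m v) = Real.sqrt v * Real.sqrt (2 / π) := by
  by_cases hv : v = 0
  · subst hv
    rw [gaussianReal_zero_var, integral_dirac]
    simp
  · have hv' : (0:ℝ) < (v:ℝ) := lt_of_le_of_ne (v.coe_nonneg) (by exact_mod_cast (Ne.symm hv))
    have hb : (0:ℝ) < (2 * (v:ℝ))⁻¹ := by positivity
    rw [gauss_integral_eq m hv]
    have h1 : ∀ x : ℝ, gaussianPDFReal m v x * |x - m|
        = (√(2 * π * (v:ℝ)))⁻¹ * ((fun y => |y| * rexp (-(2 * (v:ℝ))⁻¹ * y ^ 2)) (x - m)) := by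
      intro x
      simp only [gaussianPDFReal]
      rw [neg_div, div_eq_inv_mul]
      ring
    simp_rw [h1]
    rw [integral_const_mul, integral_sub_right_eq_self
      (fun y => |y| * rexp (-(2 * (v:ℝ))⁻¹ * y ^ 2)) m, myint_abs hb, inv_inv]
    -- algebra: (√(2πv))⁻¹ * (2v) = √v * √(2/π)
    have hπ : (0:ℝ) < π := Real.pi_pos
    have e1 : √(2 * π * (v:ℝ)) = √2 * √π * √(v:ℝ) := by
      rw [Real.sqrt_mul (by positivity), Real.sqrt_mul (by norm_num)]
    have e2 : √(2 / π) = √2 / √π := Real.sqrt_div (by norm_num) π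
    rw [e1, e2]
    have h2 : √2 * √2 = 2 := Real.mul_self_sqrt (by norm_num)
    have hπ2 : √π * √π = π := Real.mul_self_sqrt hπ.le
    have hv2 : √(v:ℝ) * √(v:ℝ) = (v:ℝ) := Real.mul_self_sqrt hv'.le
    have p2 : (0:ℝ) < √2 := Real.sqrt_pos.mpr (by norm_num)
    have pπ : (0:ℝ) < √π := Real.sqrt_pos.mpr hπ
    have pv : (0:ℝ) < √(v:ℝ) := Real.sqrt_pos.mpr hv'
    field_simp
    have : √↑v * √2 * (√2 * √π * √↑v) = (√2 * √2) * (√↑v * √↑v) * √π := by ring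
    rw [Real.sq_sqrt (by norm_num), Real.sq_sqrt hv'.le]

instance {n : ℕ} (σ : Fin n → NNReal) (a : Fin n → ℝ) :
    IsProbabilityMeasure (gaussPi σ a) := by
  unfold gaussPi; infer_instance

lemma pi_map_eval {ι : Type*} [Fintype ι] {α : ι → Type*} [∀ i, MeasurableSpace (α i)]
    (μ : ∀ i, Measure (α i)) [∀ i, IsProbabilityMeasure (μ i)] (i : ι) :
    (Measure.pi μ).map (Function.eval i) = μ i := by
  classical
  ext s hs
  rw [Measure.map_apply (measurable_pi_apply i) hs, Set.eval_preimage,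
    Measure.pi_pi]
  rw [show (s : Set (α i)) = Function.update (fun j => (univ : Set (α j))) i s i by
    simp [Function.update_self]]
  rw [Finset.prod_eq_single i]
  · simp
  · intro j _ hj
    simp [Function.update_of_ne hj]
  · simp

lemma gaussPi_marginal_abs {n : ℕ} (σ : Fin n → NNReal) (a : Fin n → ℝ) (i : Fin n) :
    ∫ a', |a' i - a i| ∂(gaussPi σ a) = (σ i : ℝ) * Real.sqrt (2 / π) := by
  have hmap : (gaussPi σ a).map (Function.eval i) = gaussianReal (a i) (σ i ^ 2) :=
    pi_map_eval _ i
  have hcont : Continuous fun x : ℝ => |x - a i| := (continuous_id.sub continuous_const).abs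
  have := integral_map (μ := gaussPi σ a) (φ := Function.eval i)
    (measurable_pi_apply i).aemeasurable
    (f := fun x : ℝ => |x - a i|) (hcont.aestronglyMeasurable.mono_measure le_rfl)
  rw [hmap] at this
  rw [← this, gauss_mad]
  simp [Real.sqrt_sq (σ i).coe_nonneg, NNReal.coe_pow]

lemma gaussPi_integrable_abs {n : ℕ} (σ : Fin n → NNReal) (a : Fin n → ℝ) (i : Fin n) :
    Integrable (fun a' => |a' i - a i|) (gaussPi σ a) := by
  have hmap : (gaussPi σ a).map (Function.eval i) = gaussianReal (a i) (σ i ^ 2) :=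
    pi_map_eval _ i
  have hcont : Continuous fun x : ℝ => |x - a i| := (continuous_id.sub continuous_const).abs
  have h := (integrable_map_measure (f := Function.eval i)
      (g := fun x : ℝ => |x - a i|)
      (hcont.aestronglyMeasurable.mono_measure le_rfl)
      (measurable_pi_apply i).aemeasurable (μ := gaussPi σ a))
  rw [hmap] at h
  exact h.mp (gauss_mad_integrable (a i) (σ i ^ 2))

lemma gaussPi_l1 {n : ℕ} (σ : Fin n → NNReal) (a : Fin n → ℝ) :
    ∫ a', ∑ i, |a' i - a i| ∂(gaussPi σ a)
      = Real.sqrt (2 / π) * ∑ i, (σ i : ℝ) := by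
  rw [integral_finset_sum _ (fun i _ => gaussPi_integrable_abs σ a i)]
  simp_rw [gaussPi_marginal_abs σ a]
  rw [Finset.mul_sum]
  exact Finset.sum_congr rfl fun i _ => mul_comm _ _

lemma gaussPi_integrable_l1 {n : ℕ} (σ : Fin n → NNReal) (a : Fin n → ℝ) :
    Integrable (fun a' => ∑ i, |a' i - a i|) (gaussPi σ a) :=
  integrable_finset_sum _ (fun i _ => gaussPi_integrable_abs σ a i)

lemma iSup_diff_le {α : Type*} [Nonempty α] {f g : α → ℝ} {c : ℝ}
    (hf : BddAbove (Set.range f)) (hg : BddAbove (Set.range g))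
    (h : ∀ x, |f x - g x| ≤ c) : |(⨆ x, f x) - ⨆ x, g x| ≤ c := by
  rw [abs_sub_le_iff]
  constructor
  · rw [sub_le_iff_le_add]
    refine ciSup_le fun x => ?_
    have h1 := (abs_sub_le_iff.mp (h x)).1
    have h2 : g x ≤ ⨆ y, g y := le_ciSup hg x
    linarith
  · rw [sub_le_iff_le_add]
    refine ciSup_le fun x => ?_
    have h1 := (abs_sub_le_iff.mp (h x)).2
    have h2 : f x ≤ ⨆ y, f y := le_ciSup hf x
    linarith

lemma integrable_of_bound {α : Type*} [MeasurableSpace α] (μ : Measure α)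
    [IsProbabilityMeasure μ] (f : α → ℝ) (hf : AEStronglyMeasurable f μ) (C : ℝ)
    (h : ∀ x, |f x| ≤ C) : Integrable f μ :=
  ⟨hf, HasFiniteIntegral.of_bounded (C := C)
    (ae_of_all _ (by simpa [Real.norm_eq_abs] using h))⟩

lemma cont_of_lip {n : ℕ} {L : ℝ} (hL : 0 ≤ L) {f : (Fin n → ℝ) → ℝ}
    (h : ∀ a b, |f a - f b| ≤ L * ∑ i, |a i - b i|) : Continuous f := by
  refine LipschitzWith.continuous (K := (L * n).toNNReal) ?_
  refine LipschitzWith.of_dist_le_mul fun a b => ?_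
  rw [Real.coe_toNNReal _ (by positivity), Real.dist_eq]
  calc |f a - f b| ≤ L * ∑ i, |a i - b i| := h a b
    _ ≤ L * ∑ _i : Fin n, dist a b := by
        refine mul_le_mul_of_nonneg_left (Finset.sum_le_sum fun i _ => ?_) hL
        rw [← Real.dist_eq]
        exact dist_le_pi_dist a b i
    _ = L * ↑n * dist a b := by
        rw [Finset.sum_const, Finset.card_univ, Fintype.card_fin, nsmul_eq_mul]; ring

lemma wsum_bound {S : Type*} [Fintype S] (w u : S → ℝ) (hw : ∀ s, 0 ≤ w s)
    (hw1 : ∑ s, w s = 1) : |∑ s, w s * u s| ≤ ‖u‖ := by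
  calc |∑ s, w s * u s| ≤ ∑ s, |w s * u s| := Finset.abs_sum_le_sum_abs _ _
    _ = ∑ s, w s * |u s| := by
        refine Finset.sum_congr rfl fun s _ => ?_
        rw [abs_mul, abs_of_nonneg (hw s)]
    _ ≤ ∑ s, w s * ‖u‖ := by
        refine Finset.sum_le_sum fun s _ => mul_le_mul_of_nonneg_left ?_ (hw s)
        simpa [Real.norm_eq_abs] using norm_le_pi_norm u s
    _ = ‖u‖ := by rw [← Finset.sum_mul, hw1, one_mul]

lemma dsum_bound {S : Type*} [Fintype S] (d u : S → ℝ) :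
    |∑ s, d s * u s| ≤ (∑ s, |d s|) * ‖u‖ := by
  calc |∑ s, d s * u s| ≤ ∑ s, |d s * u s| := Finset.abs_sum_le_sum_abs _ _
    _ ≤ ∑ s, |d s| * ‖u‖ := by
        refine Finset.sum_le_sum fun s _ => ?_
        rw [abs_mul]
        refine mul_le_mul_of_nonneg_left ?_ (abs_nonneg _)
        simpa [Real.norm_eq_abs] using norm_le_pi_norm u s
    _ = (∑ s, |d s|) * ‖u‖ := by rw [Finset.sum_mul]

/-- Continuous bias bound. For an MDP with finite states and
actions in `ℝⁿ` whose reward is `L_r`-Lipschitz (ℓ¹) and transitions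
`L_p`-Lipschitz in TV, with rewards in `[0, R_max]`, the optimal value `v*` and
the optimal value `v*_σ` among Gaussian policies with std `σ` satisfy
`‖v* - v*_σ‖ ≤ √(2/π) · ((1-γ)L_r + γ L_p R_max) ‖σ‖₁ / (1-γ)²`. -/
theorem continuous_bias_bound
    {S : Type*} [Fintype S] [Nonempty S] (n : ℕ)
    (γ Rmax Lr Lp : ℝ) (hγ0 : 0 ≤ γ) (hγ1 : γ < 1) (hLr : 0 ≤ Lr) (hLp : 0 ≤ Lp)
    (σ : Fin n → NNReal)
    (r : S → (Fin n → ℝ) → ℝ) (P : S → (Fin n → ℝ) → S → ℝ)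
    (hr : ∀ s a, r s a ∈ Set.Icc 0 Rmax)
    (hP : ∀ s a, (∀ s', 0 ≤ P s a s') ∧ ∑ s', P s a s' = 1)
    (hLipr : ∀ s a₁ a₂, |r s a₁ - r s a₂| ≤ Lr * ∑ i, |a₁ i - a₂ i|)
    (hLipP : ∀ s a₁ a₂, ∑ s', |P s a₁ s' - P s a₂ s'| ≤ Lp * ∑ i, |a₁ i - a₂ i|)
    (vstar vσ : S → ℝ)
    (hstar : ∀ s, vstar s = ⨆ a : Fin n → ℝ, (r s a + γ * ∑ s', P s a s' * vstar s'))
    (hσfix : ∀ s, vσ s = ⨆ a : Fin n → ℝ,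
      ((∫ a', r s a' ∂(gaussPi σ a)) +
        γ * ∑ s', (∫ a', P s a' s' ∂(gaussPi σ a)) * vσ s')) :
    ‖vstar - vσ‖ ≤
      Real.sqrt (2 / Real.pi) * ((1 - γ) * Lr + γ * Lp * Rmax)
        * (∑ i, (σ i : ℝ)) / (1 - γ) ^ 2 := by
  classical
  set κ : ℝ := Real.sqrt (2 / π) * ∑ i, (σ i : ℝ) with hκdef
  have hκ : 0 ≤ κ := by positivity
  set B : ℝ := ‖vstar‖ with hBdef
  set D : ℝ := ‖vstar - vσ‖ with hDdef
  have hB0 : 0 ≤ B := norm_nonneg _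
  have hD0 : 0 ≤ D := norm_nonneg _
  obtain ⟨s₀⟩ := ‹Nonempty S›
  have hRmax : 0 ≤ Rmax := le_trans (hr s₀ 0).1 (hr s₀ 0).2
  -- continuity
  have hrc : ∀ s, Continuous (r s) := fun s => cont_of_lip hLr (hLipr s)
  have hPc : ∀ s s', Continuous (fun a => P s a s') := by
    intro s s'
    refine cont_of_lip hLp fun a b => ?_
    calc |P s a s' - P s b s'| ≤ ∑ t, |P s a t - P s b t| :=
          Finset.single_le_sum (f := fun t => |P s a t - P s b t|) (fun t _ => abs_nonneg _) (Finset.mem_univ s')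
      _ ≤ Lp * ∑ i, |a i - b i| := hLipP s a b
  have hP01 : ∀ s a s', P s a s' ≤ 1 := by
    intro s a s'
    have := Finset.single_le_sum (f := fun t => P s a t) (fun t _ => (hP s a).1 t) (Finset.mem_univ s')
    rw [(hP s a).2] at this
    exact this
  -- integrability
  have h_int_r : ∀ s a, Integrable (fun a' => r s a') (gaussPi σ a) := by
    intro s a
    exact integrable_of_bound _ _ ((hrc s).aestronglyMeasurable.mono_measure le_rfl) Rmax
      (fun x => abs_le.mpr ⟨by linarith [(hr s x).1], (hr s x).2⟩)
  have h_int_P : ∀ s a s', Integrable (fun a' => P s a' s') (gaussPi σ a) := by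
    intro s a s'
    exact integrable_of_bound _ _ ((hPc s s').aestronglyMeasurable.mono_measure le_rfl) 1
      (fun x => abs_le.mpr ⟨by linarith [(hP s x).1 s'], hP01 s x s'⟩)
  -- smoothed reward bound
  have hrκ : ∀ s a, |(∫ a', r s a' ∂(gaussPi σ a)) - r s a| ≤ Lr * κ := by
    intro s a
    have h1 : (∫ a', r s a' ∂(gaussPi σ a)) - r s a
        = ∫ a', (r s a' - r s a) ∂(gaussPi σ a) := by
      rw [integral_sub (h_int_r s a) (integrable_const _), integral_const]
      simp
    rw [h1]
    calc |∫ a', (r s a' - r s a) ∂(gaussPi σ a)|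
        ≤ ∫ a', |r s a' - r s a| ∂(gaussPi σ a) := by
          simpa [Real.norm_eq_abs] using
            norm_integral_le_integral_norm (μ := gaussPi σ a) (fun a' => r s a' - r s a)
      _ ≤ ∫ a', Lr * ∑ i, |a' i - a i| ∂(gaussPi σ a) := by
          refine integral_mono_of_nonneg (ae_of_all _ fun x => abs_nonneg _)
            ((gaussPi_integrable_l1 σ a).const_mul Lr) (ae_of_all _ fun x => hLipr s x a)
      _ = Lr * κ := by rw [integral_const_mul, gaussPi_l1]
  -- smoothed transition bound
  have hPκ : ∀ s a, ∑ s', |(∫ a', P s a' s' ∂(gaussPi σ a)) - P s a s'| ≤ Lp * κ := by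
    intro s a
    have h2 : ∀ s', |(∫ a', P s a' s' ∂(gaussPi σ a)) - P s a s'|
        ≤ ∫ a', |P s a' s' - P s a s'| ∂(gaussPi σ a) := by
      intro s'
      have h1 : (∫ a', P s a' s' ∂(gaussPi σ a)) - P s a s'
          = ∫ a', (P s a' s' - P s a s') ∂(gaussPi σ a) := by
        rw [integral_sub (h_int_P s a s') (integrable_const _), integral_const]
        simp
      rw [h1]
      simpa [Real.norm_eq_abs] using
        norm_integral_le_integral_norm (μ := gaussPi σ a) (fun a' => P s a' s' - P s a s')
    have h_int_absP : ∀ s', Integrable (fun a' => |P s a' s' - P s a s'|) (gaussPi σ a) := by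
      intro s'
      refine integrable_of_bound _ _ ?_ 2 fun x => ?_
      · exact ((hPc s s').sub continuous_const).abs.aestronglyMeasurable.mono_measure le_rfl
      · rw [abs_abs]
        have h3 := (hP s x).1 s'
        have h4 := hP01 s x s'
        have h5 := (hP s a).1 s'
        have h6 := hP01 s a s'
        rw [abs_sub_le_iff]; constructor <;> linarith
    calc ∑ s', |(∫ a', P s a' s' ∂(gaussPi σ a)) - P s a s'|
        ≤ ∑ s', ∫ a', |P s a' s' - P s a s'| ∂(gaussPi σ a) :=
          Finset.sum_le_sum fun s' _ => h2 s'
      _ = ∫ a', ∑ s', |P s a' s' - P s a s'| ∂(gaussPi σ a) :=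
          (integral_finset_sum _ fun s' _ => h_int_absP s').symm
      _ ≤ ∫ a', Lp * ∑ i, |a' i - a i| ∂(gaussPi σ a) := by
          refine integral_mono_of_nonneg
            (ae_of_all _ fun x => Finset.sum_nonneg fun s' _ => abs_nonneg _)
            ((gaussPi_integrable_l1 σ a).const_mul Lp) (ae_of_all _ fun x => hLipP s x a)
      _ = Lp * κ := by rw [integral_const_mul, gaussPi_l1]
  -- smoothed weights
  have hw0 : ∀ s a s', 0 ≤ ∫ a', P s a' s' ∂(gaussPi σ a) :=
    fun s a s' => integral_nonneg fun x => (hP s x).1 s'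
  have hw1 : ∀ s a, ∑ s', ∫ a', P s a' s' ∂(gaussPi σ a) = 1 := by
    intro s a
    rw [← integral_finset_sum _ (fun s' _ => h_int_P s a s')]
    have : ∀ a' : Fin n → ℝ, ∑ s', P s a' s' = 1 := fun a' => (hP s a').2
    simp_rw [this]
    simp
  have hw_ub : ∀ s a, (∫ a', r s a' ∂(gaussPi σ a)) ≤ Rmax := by
    intro s a
    calc (∫ a', r s a' ∂(gaussPi σ a)) ≤ ∫ _a', Rmax ∂(gaussPi σ a) :=
          integral_mono (h_int_r s a) (integrable_const _) (fun x => (hr s x).2)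
      _ = Rmax := by simp
  -- bounded above
  have hbddf : ∀ s, BddAbove (Set.range (fun a => r s a + γ * ∑ s', P s a s' * vstar s')) := by
    intro s
    refine ⟨Rmax + γ * B, ?_⟩
    rintro x ⟨a, rfl⟩
    have h1 : ∑ s', P s a s' * vstar s' ≤ B :=
      le_trans (le_abs_self _) (wsum_bound _ vstar (hP s a).1 (hP s a).2)
    have := (hr s a).2
    have := mul_le_mul_of_nonneg_left h1 hγ0
    simp only []
    linarith
  have hbddg : ∀ s, BddAbove (Set.range (fun a =>
      (∫ a', r s a' ∂(gaussPi σ a)) +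
        γ * ∑ s', (∫ a', P s a' s' ∂(gaussPi σ a)) * vσ s')) := by
    intro s
    refine ⟨Rmax + γ * ‖vσ‖, ?_⟩
    rintro x ⟨a, rfl⟩
    have h1 : ∑ s', (∫ a', P s a' s' ∂(gaussPi σ a)) * vσ s' ≤ ‖vσ‖ :=
      le_trans (le_abs_self _) (wsum_bound _ vσ (hw0 s a) (hw1 s a))
    have h2 := hw_ub s a
    have := mul_le_mul_of_nonneg_left h1 hγ0
    simp only []
    linarith
  -- bound on B
  have hBe : B * (1 - γ) ≤ Rmax := by
    have hb : ∀ s, |vstar s| ≤ Rmax + γ * B := by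
      intro s
      have hub : vstar s ≤ Rmax + γ * B := by
        rw [hstar s]
        refine ciSup_le fun a => ?_
        have h1 : ∑ s', P s a s' * vstar s' ≤ B :=
          le_trans (le_abs_self _) (wsum_bound _ vstar (hP s a).1 (hP s a).2)
        have := (hr s a).2
        have := mul_le_mul_of_nonneg_left h1 hγ0
        linarith
      have hlb : -(γ * B) ≤ vstar s := by
        rw [hstar s]
        refine le_trans ?_ (le_ciSup (hbddf s) (0 : Fin n → ℝ))
        have h1 : -B ≤ ∑ s', P s 0 s' * vstar s' :=
          neg_le_of_abs_le (wsum_bound _ vstar (hP s 0).1 (hP s 0).2)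
        have := (hr s 0).1
        have := mul_le_mul_of_nonneg_left h1 hγ0
        linarith
      rw [abs_le]
      constructor
      · have : 0 ≤ γ * B := mul_nonneg hγ0 hB0
        linarith
      · exact hub
    have hBb : B ≤ Rmax + γ * B := by
      rw [hBdef]
      rw [pi_norm_le_iff_of_nonneg (by nlinarith [mul_nonneg hγ0 hB0])]
      intro s
      simpa [Real.norm_eq_abs] using hb s
    nlinarith
  -- per-state key estimate
  have key : ∀ s, |vstar s - vσ s| ≤ Lr * κ + γ * (Lp * κ * B + D) := by
    intro s
    rw [hstar s, hσfix s]
    refine iSup_diff_le (hbddf s) (hbddg s) fun a => ?_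
    have e1 := hrκ s a
    have e2 := hPκ s a
    have hsum : ∑ s', P s a s' * vstar s'
        - ∑ s', (∫ a', P s a' s' ∂(gaussPi σ a)) * vσ s'
        = (∑ s', (P s a s' - ∫ a', P s a' s' ∂(gaussPi σ a)) * vstar s')
          + ∑ s', (∫ a', P s a' s' ∂(gaussPi σ a)) * (vstar - vσ) s' := by
      rw [← Finset.sum_add_distrib, ← Finset.sum_sub_distrib]
      refine Finset.sum_congr rfl fun s' _ => ?_
      simp only [Pi.sub_apply]
      ring
    have e3 : |∑ s', (P s a s' - ∫ a', P s a' s' ∂(gaussPi σ a)) * vstar s'| ≤ Lp * κ * B := by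
      refine le_trans (dsum_bound _ vstar) ?_
      have h4 : ∑ s', |P s a s' - ∫ a', P s a' s' ∂(gaussPi σ a)| ≤ Lp * κ := by
        refine le_trans (le_of_eq ?_) e2
        exact Finset.sum_congr rfl fun s' _ => abs_sub_comm _ _
      exact mul_le_mul_of_nonneg_right h4 hB0
    have e4 : |∑ s', (∫ a', P s a' s' ∂(gaussPi σ a)) * (vstar - vσ) s'| ≤ D :=
      wsum_bound _ (vstar - vσ) (hw0 s a) (hw1 s a)
    have expand : (r s a + γ * ∑ s', P s a s' * vstar s')
        - ((∫ a', r s a' ∂(gaussPi σ a)) +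
            γ * ∑ s', (∫ a', P s a' s' ∂(gaussPi σ a)) * vσ s')
        = (r s a - ∫ a', r s a' ∂(gaussPi σ a))
          + γ * ((∑ s', (P s a s' - ∫ a', P s a' s' ∂(gaussPi σ a)) * vstar s')
            + ∑ s', (∫ a', P s a' s' ∂(gaussPi σ a)) * (vstar - vσ) s') := by
      rw [← hsum]; ring
    rw [expand]
    calc |(r s a - ∫ a', r s a' ∂(gaussPi σ a))
          + γ * ((∑ s', (P s a s' - ∫ a', P s a' s' ∂(gaussPi σ a)) * vstar s')
            + ∑ s', (∫ a', P s a' s' ∂(gaussPi σ a)) * (vstar - vσ) s')|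
        ≤ |r s a - ∫ a', r s a' ∂(gaussPi σ a)|
          + γ * (|∑ s', (P s a s' - ∫ a', P s a' s' ∂(gaussPi σ a)) * vstar s'|
            + |∑ s', (∫ a', P s a' s' ∂(gaussPi σ a)) * (vstar - vσ) s'|) := by
          refine le_trans (abs_add_le _ _) ?_
          have := abs_add_le (∑ s', (P s a s' - ∫ a', P s a' s' ∂(gaussPi σ a)) * vstar s')
            (∑ s', (∫ a', P s a' s' ∂(gaussPi σ a)) * (vstar - vσ) s')
          rw [abs_mul, abs_of_nonneg hγ0]
          exact add_le_add le_rfl (mul_le_mul_of_nonneg_left this hγ0)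
      _ ≤ Lr * κ + γ * (Lp * κ * B + D) := by
          rw [abs_sub_comm] at e1
          exact add_le_add e1 (mul_le_mul_of_nonneg_left (add_le_add e3 e4) hγ0)
  -- contraction
  have hc0 : 0 ≤ Lr * κ + γ * (Lp * κ * B + D) :=
    add_nonneg (mul_nonneg hLr hκ)
      (mul_nonneg hγ0 (add_nonneg (mul_nonneg (mul_nonneg hLp hκ) hB0) hD0))
  have hD : D ≤ Lr * κ + γ * (Lp * κ * B + D) := by
    rw [hDdef, pi_norm_le_iff_of_nonneg hc0]
    intro s
    simpa [Real.norm_eq_abs] using key s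
  have he : (0:ℝ) < 1 - γ := by linarith
  have he2 : (0:ℝ) < (1 - γ)^2 := by positivity
  have h7 : D * (1 - γ) ≤ Lr * κ + γ * (Lp * κ) * B := by nlinarith [hD]
  have h8 : D * (1 - γ)^2 ≤ (Lr * κ) * (1 - γ) + (γ * (Lp * κ)) * (B * (1 - γ)) := by
    nlinarith [mul_le_mul_of_nonneg_right h7 he.le]
  have h9 : (γ * (Lp * κ)) * (B * (1 - γ)) ≤ (γ * (Lp * κ)) * Rmax :=
    mul_le_mul_of_nonneg_left hBe (mul_nonneg hγ0 (mul_nonneg hLp hκ))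
  have h10 : Real.sqrt (2 / Real.pi) * ((1 - γ) * Lr + γ * Lp * Rmax) * (∑ i, (σ i : ℝ))
      = (Lr * κ) * (1 - γ) + (γ * (Lp * κ)) * Rmax := by
    rw [hκdef]; ring
  rw [le_div_iff₀ he2]
  linarith [h8, h9]
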